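/- For all real numbers x > 0, y > 0, and z ≥ 0, if z ≤ x·log(1 + y·z) then z ≤ 3x·log(1 + x·y), where log denotes the natural logarithm. -/

import Mathlib

lemma log_ineq_key (a t : ℝ) (ha : 0 < a) (ht : 0 ≤ t)
    (h : t ≤ a * Real.log (1 + t)) : t ≤ 3 * a * Real.log (1 + a) := by
  set L := Real.log (1 + a) with hLdef
  have hL : 0 < L := Real.log_pos (by linarith)
  have hLa : L ≤ a := by
    have := Real.log_le_sub_one_of_pos (show (0:ℝ) < 1 + a by linarith)
    linarith
  set T := 3 * a * L with hT
  have hT0 : 0 < T := by positivity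
  -- a < 1 + T
  have haT : a < 1 + T := by
    rcases le_or_gt a 1 with hc | hc
    · linarith
    · have h2 : Real.log 2 ≤ L := by
        apply Real.log_le_log (by norm_num); linarith
      have hl2 : (0.6931471803 : ℝ) < Real.log 2 := Real.log_two_gt_d9
      nlinarith
  -- T ≥ a * log (1 + T)
  have hgT : a * Real.log (1 + T) ≤ T := by
    have h1 : 1 + T ≤ (1 + a) ^ 3 := by nlinarith [mul_le_mul_of_nonneg_left hLa (show (0:ℝ) ≤ 3 * a by positivity)]
    have h2 : Real.log (1 + T) ≤ Real.log ((1 + a) ^ 3) :=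
      Real.log_le_log (by linarith) h1
    rw [Real.log_pow] at h2
    push_cast at h2
    nlinarith
  by_contra hcon
  push_neg at hcon
  have h1T : (0:ℝ) < 1 + T := by linarith
  have h1t : (0:ℝ) < 1 + t := by linarith
  have hratio : Real.log ((1 + t) / (1 + T)) ≤ (1 + t) / (1 + T) - 1 :=
    Real.log_le_sub_one_of_pos (div_pos h1t h1T)
  rw [Real.log_div (by linarith) (by linarith)] at hratio
  have hdiv : (1 + t) / (1 + T) - 1 = (t - T) / (1 + T) := by
    field_simp
    ring
  rw [hdiv] at hratio
  -- so log(1+t) ≤ log(1+T) + (t-T)/(1+T)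
  have hfrac : (t - T) / (1 + T) * (1 + T) = t - T := by
    field_simp
  nlinarith [mul_le_mul_of_nonneg_left hratio ha.le,
    mul_pos (sub_pos.mpr hcon) h1T,
    div_nonneg (sub_pos.mpr hcon).le h1T.le]

/-- For reals `x > 0`, `y > 0`, `z ≥ 0`: if `z ≤ x·log(1 + y·z)` then `z ≤ 3x·log(1 + x·y)`. -/
theorem log_inequality_bound (x y z : ℝ) (hx : 0 < x) (hy : 0 < y) (hz : 0 ≤ z)
    (h : z ≤ x * Real.log (1 + y * z)) :
    z ≤ 3 * x * Real.log (1 + x * y) := by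
  have ht : (0:ℝ) ≤ y * z := by positivity
  have h' : y * z ≤ (x * y) * Real.log (1 + y * z) := by
    have := mul_le_mul_of_nonneg_left h hy.le
    nlinarith
  have key := log_ineq_key (x * y) (y * z) (by positivity) ht h'
  have : y * z ≤ y * (3 * x * Real.log (1 + x * y)) := by ring_nf; ring_nf at key; linarith
  exact le_of_mul_le_mul_left this hy
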